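/- Let G be a real symmetric positive semidefinite d×d matrix whose rank is at most m, where 1 ≤ m ≤ d, and let c > 0. Then det(c·I_d + G) ≤ c^{d−m} · (c + Tr(G)/m)^m. -/

import Mathlib

open Matrix Finset

/-- **Determinant–trace inequality for low-rank PSD matrices.**  If `G` is a real
symmetric PSD `d×d` matrix of rank at most `m` (with `1 ≤ m ≤ d`) and `c > 0`, then
`det (c·I + G) ≤ c^(d−m) · (c + Tr G / m)^m`. -/
theorem det_le_of_rank_le {d m : ℕ} (hm1 : 1 ≤ m) (hmd : m ≤ d)
    (G : Matrix (Fin d) (Fin d) ℝ) (hG : G.PosSemidef) (hrank : G.rank ≤ m)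
    (c : ℝ) (hc : 0 < c) :
    (c • (1 : Matrix (Fin d) (Fin d) ℝ) + G).det
      ≤ c ^ (d - m) * (c + G.trace / m) ^ m := by
  classical
  have hH := hG.isHermitian
  set eig := hH.eigenvalues with heig
  set V : Matrix (Fin d) (Fin d) ℝ := (hH.eigenvectorUnitary : Matrix (Fin d) (Fin d) ℝ) with hVdef
  have hVmem := (hH.eigenvectorUnitary).2
  have hVV : V * star V = 1 := Matrix.mem_unitaryGroup_iff.mp hVmem
  have hVV' : star V * V = 1 := Matrix.mem_unitaryGroup_iff'.mp hVmem
  have heignn : ∀ i, 0 ≤ eig i := fun i => hG.eigenvalues_nonneg i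
  have hm0 : (0:ℝ) < (m:ℝ) := by exact_mod_cast hm1
  -- diagonalization of c•1 + G
  have hD : c • (1 : Matrix (Fin d) (Fin d) ℝ)
        + Matrix.diagonal (RCLike.ofReal ∘ eig)
      = Matrix.diagonal (fun i => c + eig i) := by
    ext i j
    by_cases h : i = j <;>
      simp [Matrix.diagonal, Matrix.one_apply, h]
  have hdiag : c • (1 : Matrix (Fin d) (Fin d) ℝ) + G
      = V * Matrix.diagonal (fun i => c + eig i) * star V := by
    conv_lhs => rw [hH.spectral_theorem]
    rw [← hD, mul_add, add_mul]
    congr 1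
    rw [Matrix.mul_smul, mul_one, Matrix.smul_mul, hVV]
  have hdet : (c • (1 : Matrix (Fin d) (Fin d) ℝ) + G).det
      = ∏ i, (c + eig i) := by
    rw [hdiag, Matrix.det_mul_right_comm, hVV, one_mul, Matrix.det_diagonal]
  have htr : G.trace = ∑ i, eig i := by
    conv_lhs => rw [hH.spectral_theorem]
    rw [Unitary.conjStarAlgAut_apply, Matrix.trace_mul_comm, ← mul_assoc, hVV', one_mul, Matrix.trace_diagonal]
    simp [heig]
  -- the set of nonzero eigenvalues
  set T : Finset (Fin d) := Finset.univ.filter (fun i => eig i ≠ 0) with hTdef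
  have hTcard : T.card ≤ m := by
    have : G.rank = T.card := by
      rw [hH.rank_eq_card_non_zero_eigs, Fintype.card_subtype]
    omega
  obtain ⟨S, hTS, _, hScard⟩ :=
    Finset.exists_subsuperset_card_eq (T.subset_univ) hTcard
      (by simpa using hmd)
  have hzero : ∀ i ∉ S, eig i = 0 := by
    intro i hi
    by_contra h
    exact hi (hTS (Finset.mem_filter.mpr ⟨Finset.mem_univ _, h⟩))
  have hprod : ∏ i, (c + eig i) = (∏ i ∈ S, (c + eig i)) * c ^ (d - m) := by
    rw [← Finset.prod_mul_prod_compl S]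
    congr 1
    rw [Finset.prod_congr rfl (fun i hi => by
      rw [hzero i (Finset.mem_compl.mp hi), add_zero]),
      Finset.prod_const, Finset.card_compl, hScard, Fintype.card_fin]
  have hsum : ∑ i ∈ S, eig i = G.trace := by
    rw [htr, ← Finset.sum_add_sum_compl S eig, Finset.sum_congr rfl
      (fun i hi => hzero i (Finset.mem_compl.mp hi)), Finset.sum_const, smul_zero, add_zero]
  have hznn : ∀ i ∈ S, (0:ℝ) ≤ c + eig i := fun i _ => add_nonneg hc.le (heignn i)
  -- AM-GM on S
  have hAM0 := Real.geom_mean_le_arith_mean_weighted S (fun _ => (m:ℝ)⁻¹)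
      (fun i => c + eig i) (fun i _ => by positivity)
      (by rw [Finset.sum_const, hScard, nsmul_eq_mul, mul_inv_cancel₀ hm0.ne']) hznn
  have hprodnn : (0:ℝ) ≤ ∏ i ∈ S, (c + eig i) := Finset.prod_nonneg hznn
  have hlhs : ∏ i ∈ S, (c + eig i) ^ ((m:ℝ)⁻¹)
      = (∏ i ∈ S, (c + eig i)) ^ ((m:ℝ)⁻¹) := by
    rw [← Real.finset_prod_rpow S _ hznn]
  have hrhs : ∑ i ∈ S, (m:ℝ)⁻¹ * (c + eig i) = c + G.trace / m := by
    rw [← Finset.mul_sum, Finset.sum_add_distrib, Finset.sum_const, hScard, hsum,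
      nsmul_eq_mul, mul_add, ← mul_assoc, inv_mul_cancel₀ hm0.ne', one_mul,
      inv_mul_eq_div]
  rw [hlhs, hrhs] at hAM0
  have hAM : ∏ i ∈ S, (c + eig i) ≤ (c + G.trace / m) ^ m := by
    have hQnn : (0:ℝ) ≤ c + G.trace / m :=
      le_trans (Real.rpow_nonneg hprodnn _) hAM0
    calc ∏ i ∈ S, (c + eig i)
        = (((∏ i ∈ S, (c + eig i)) ^ ((m:ℝ)⁻¹)) ^ (m:ℝ)) := by
          rw [← Real.rpow_mul hprodnn, inv_mul_cancel₀ hm0.ne', Real.rpow_one]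
      _ ≤ (c + G.trace / m) ^ (m:ℝ) :=
          Real.rpow_le_rpow (Real.rpow_nonneg hprodnn _) hAM0 hm0.le
      _ = (c + G.trace / m) ^ m := Real.rpow_natCast _ m
  rw [hdet, hprod, mul_comm]
  exact mul_le_mul_of_nonneg_left hAM (by positivity)
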